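/- Let α ∈ ℝ and c ∈ ℝ with c ≠ 0, and let q_w be the rogue wave q_w(x,t) = c·(−64c²α²t² − 16c⁴t² − 32c²αxt + 16ic²t − 4c²x² + 3)·exp(−2i(2α²t − c²t + αx)) / (64α²c²t² + 16c⁴t² + 32αc²tx + 4c²x² + 1). Then |q_w(x,t)|² → c² as x² + t² → ∞; that is, for every ε > 0 there exists M > 0 such that x² + t² > M implies ||q_w(x,t)|² − c²| < ε. (The rogue wave is localized: it decays to the constant background amplitude |c| in every direction of the (x,t)-plane.) -/

import Mathlib

open Complex

/-- Partial derivative in `x` of a function of `(x,t)`. -/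
noncomputable def pX (f : ℝ → ℝ → ℂ) : ℝ → ℝ → ℂ := fun x t => deriv (fun x' => f x' t) x

/-- Partial derivative in `t` of a function of `(x,t)`. -/
noncomputable def pT (f : ℝ → ℝ → ℂ) : ℝ → ℝ → ℂ := fun x t => deriv (fun t' => f x t') t

/-- The rogue wave
`q_w(x,t) = c(−64c²α²t² − 16c⁴t² − 32c²αxt + 16ic²t − 4c²x² + 3) e^{−2i(2α²t − c²t + αx)}
  / (64α²c²t² + 16c⁴t² + 32αc²tx + 4c²x² + 1)`. -/
noncomputable def rogueWave (α c : ℝ) : ℝ → ℝ → ℂ := fun x t =>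
  (c : ℂ) * (-64 * (c : ℂ) ^ 2 * (α : ℂ) ^ 2 * (t : ℂ) ^ 2 - 16 * (c : ℂ) ^ 4 * (t : ℂ) ^ 2
      - 32 * (c : ℂ) ^ 2 * (α : ℂ) * (x : ℂ) * (t : ℂ) + 16 * I * (c : ℂ) ^ 2 * (t : ℂ)
      - 4 * (c : ℂ) ^ 2 * (x : ℂ) ^ 2 + 3)
    * Complex.exp (-2 * I * ((2 * α ^ 2 * t - c ^ 2 * t + α * x : ℝ) : ℂ))
    / ((64 * α ^ 2 * c ^ 2 * t ^ 2 + 16 * c ^ 4 * t ^ 2 + 32 * α * c ^ 2 * t * x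
        + 4 * c ^ 2 * x ^ 2 + 1 : ℝ) : ℂ)

lemma rogue_abs_sq (α c x t : ℝ) :
    ‖rogueWave α c x t‖ ^ 2 =
      c ^ 2 * ((4 - (64 * α ^ 2 * c ^ 2 * t ^ 2 + 16 * c ^ 4 * t ^ 2 + 32 * α * c ^ 2 * t * x
        + 4 * c ^ 2 * x ^ 2 + 1)) ^ 2 + (16 * c ^ 2 * t) ^ 2)
      / (64 * α ^ 2 * c ^ 2 * t ^ 2 + 16 * c ^ 4 * t ^ 2 + 32 * α * c ^ 2 * t * x
        + 4 * c ^ 2 * x ^ 2 + 1) ^ 2 := by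
  set D : ℝ := 64 * α ^ 2 * c ^ 2 * t ^ 2 + 16 * c ^ 4 * t ^ 2 + 32 * α * c ^ 2 * t * x
        + 4 * c ^ 2 * x ^ 2 + 1 with hD
  have hDpos : 0 < D := by
    have h1 : 0 ≤ (2*c*(x + 4*α*t))^2 := sq_nonneg _
    have h2 : 0 ≤ (4*c^2*t)^2 := sq_nonneg _
    nlinarith
  have hN : (-64 * (c : ℂ) ^ 2 * (α : ℂ) ^ 2 * (t : ℂ) ^ 2 - 16 * (c : ℂ) ^ 4 * (t : ℂ) ^ 2
      - 32 * (c : ℂ) ^ 2 * (α : ℂ) * (x : ℂ) * (t : ℂ) + 16 * I * (c : ℂ) ^ 2 * (t : ℂ)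
      - 4 * (c : ℂ) ^ 2 * (x : ℂ) ^ 2 + 3) = ((4 - D : ℝ) : ℂ) + ((16 * c^2 * t : ℝ) : ℂ) * I := by
    rw [hD]; push_cast; ring
  have hE : ‖Complex.exp (-2 * I * ((2 * α ^ 2 * t - c ^ 2 * t + α * x : ℝ) : ℂ))‖ = 1 := by
    have h2 : -2 * I * ((2 * α ^ 2 * t - c ^ 2 * t + α * x : ℝ) : ℂ)
        = ((-2 * (2 * α ^ 2 * t - c ^ 2 * t + α * x) : ℝ) : ℂ) * I := by push_cast; ring
    rw [h2, Complex.norm_exp_ofReal_mul_I]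
  rw [rogueWave]
  rw [norm_div, norm_mul, norm_mul, hE, mul_one, hN]
  have h1 : ‖((4 - D : ℝ) : ℂ) + ((16 * c^2 * t : ℝ) : ℂ) * I‖ ^ 2
      = (4 - D)^2 + (16*c^2*t)^2 := by rw [Complex.sq_norm, Complex.normSq_add_mul_I]
  rw [div_pow, mul_pow, h1, Complex.norm_real, Complex.norm_real, Real.norm_eq_abs, Real.norm_eq_abs, _root_.sq_abs, ← hD,
    abs_of_pos hDpos]

/-- the rogue wave is localized: `|q_w(x,t)|² → c²` as `x² + t² → ∞`, i.e.
for every `ε > 0` there is `M > 0` such that `x² + t² > M` implies `||q_w|² − c²| < ε`. -/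
theorem statement16 (α c : ℝ) (hc : c ≠ 0) :
    ∀ ε : ℝ, 0 < ε → ∃ M : ℝ, 0 < M ∧
      ∀ x t : ℝ, x ^ 2 + t ^ 2 > M →
        |‖rogueWave α c x t‖ ^ 2 - c ^ 2| < ε := by
  intro ε hε
  have hc2 : 0 < c ^ 2 := by positivity
  have hc4 : 0 < c ^ 4 := by positivity
  have hT : 0 < 1 + 16 * α ^ 2 + 4 * c ^ 2 := by positivity
  refine ⟨max 1 ((1 + 16 * α ^ 2 + 4 * c ^ 2) * (8 * c ^ 2 / ε + 1) / (16 * c ^ 4)),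
    lt_of_lt_of_le one_pos (le_max_left _ _), ?_⟩
  intro x t hxt
  set D : ℝ := 64 * α ^ 2 * c ^ 2 * t ^ 2 + 16 * c ^ 4 * t ^ 2 + 32 * α * c ^ 2 * t * x
        + 4 * c ^ 2 * x ^ 2 + 1 with hD
  have h16 : 16 * c ^ 4 * t ^ 2 ≤ D - 1 := by
    have h1 : 0 ≤ (2*c*(x + 4*α*t))^2 := sq_nonneg _
    nlinarith
  have hD1 : 1 ≤ D := by nlinarith [sq_nonneg (4*c^2*t)]
  have hDpos : 0 < D := by linarith
  -- quadratic form lower bound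
  have hquad : 16 * c ^ 4 * (x ^ 2 + t ^ 2) ≤ (1 + 16 * α ^ 2 + 4 * c ^ 2) * (D - 1) := by
    have hA : (0:ℝ) < 1 + 16 * α ^ 2 := by positivity
    have key : (1 + 16 * α ^ 2) * ((1 + 16 * α ^ 2 + 4 * c ^ 2) * (D - 1)
          - 16 * c ^ 4 * (x ^ 2 + t ^ 2))
        = 4 * c ^ 2 * ((1 + 16 * α ^ 2) * x + 4 * α * (1 + 16 * α ^ 2 + 4 * c ^ 2) * t) ^ 2
          + 64 * c ^ 6 * t ^ 2 := by rw [hD]; ring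
    have h0 : 0 ≤ (1 + 16 * α ^ 2) * ((1 + 16 * α ^ 2 + 4 * c ^ 2) * (D - 1)
        - 16 * c ^ 4 * (x ^ 2 + t ^ 2)) := key ▸ by positivity
    have h1 := (mul_nonneg_iff_of_pos_left hA).mp h0
    linarith
  -- now D is large
  have hM : (1 + 16 * α ^ 2 + 4 * c ^ 2) * (8 * c ^ 2 / ε + 1) / (16 * c ^ 4) < x ^ 2 + t ^ 2 :=
    lt_of_le_of_lt (le_max_right _ _) hxt
  have h16c4 : (0:ℝ) < 16 * c ^ 4 := by positivity
  have hDbig : 8 * c ^ 2 / ε + 1 < D - 1 := by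
    have h2 : (1 + 16 * α ^ 2 + 4 * c ^ 2) * (8 * c ^ 2 / ε + 1) < 16 * c ^ 4 * (x ^ 2 + t ^ 2) := by
      rw [div_lt_iff₀ h16c4] at hM; linarith
    have h3 := lt_of_lt_of_le h2 hquad
    have := (mul_lt_mul_iff_right₀ hT).mp h3
    linarith
  have hDε : 8 * c ^ 2 < ε * D := by
    have h4 : 8 * c ^ 2 / ε < D := by
      have h5 : (0:ℝ) ≤ 8 * c ^ 2 / ε := by positivity
      linarith
    calc 8 * c ^ 2 = ε * (8 * c ^ 2 / ε) := by field_simp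
    _ < ε * D := by exact (mul_lt_mul_iff_right₀ hε).mpr h4
  -- compute the difference
  have key2 : ‖rogueWave α c x t‖ ^ 2 - c ^ 2
      = c ^ 2 * (16 - 8 * D + 256 * c ^ 4 * t ^ 2) / D ^ 2 := by
    rw [rogue_abs_sq, ← hD]
    field_simp
    ring
  rw [key2]
  have hnum : |16 - 8 * D + 256 * c ^ 4 * t ^ 2| ≤ 8 * D := by
    rw [abs_le]; constructor <;> nlinarith
  have hDsq : (0:ℝ) < D ^ 2 := by positivity
  have habs : |c ^ 2 * (16 - 8 * D + 256 * c ^ 4 * t ^ 2) / D ^ 2|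
      = c ^ 2 * |16 - 8 * D + 256 * c ^ 4 * t ^ 2| / D ^ 2 := by
    rw [abs_div, abs_mul, abs_of_pos hc2, abs_of_pos hDsq]
  rw [habs]
  calc c ^ 2 * |16 - 8 * D + 256 * c ^ 4 * t ^ 2| / D ^ 2
      ≤ c ^ 2 * (8 * D) / D ^ 2 := by
        gcongr
    _ = 8 * c ^ 2 / D := by field_simp
    _ < ε := by rw [div_lt_iff₀ hDpos]; linarith [hDε]
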